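/- For any integers m ≥ 2 and i with 1 ≤ i ≤ m-2, ((m-i)/i) · ∑_{j=0}^{i-1} C(m-1, j) < ∑_{j=0}^{i} C(m-1, j). -/

import Mathlib

/-- For integers `m ≥ 2` and `1 ≤ i ≤ m-2`,
`((m-i)/i) · ∑_{j=0}^{i-1} C(m-1,j) < ∑_{j=0}^{i} C(m-1,j)`. -/
theorem stmt3 (m i : ℕ) (hm : 2 ≤ m) (hi1 : 1 ≤ i) (hi2 : i ≤ m - 2) :
    (((m : ℚ) - i) / i) * ∑ j ∈ Finset.range i, ((m - 1).choose j : ℚ)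
      < ∑ j ∈ Finset.range (i + 1), ((m - 1).choose j : ℚ) := by
  have him : i + 2 ≤ m := by omega
  have hiQ : (0:ℚ) < i := by exact_mod_cast hi1
  have key : ∀ j ∈ Finset.range i,
      ((m:ℚ) - i) / i * ((m-1).choose j : ℚ) ≤ ((m-1).choose (j+1) : ℚ) := by
    intro j hj
    rw [Finset.mem_range] at hj
    have hjm : j ≤ m - 1 := by omega
    have h1 : ((m-1).choose (j+1) * (j+1) : ℕ) = (m-1).choose j * (m-1-j) :=
      Nat.choose_succ_right_eq (m-1) j
    have h1Q : ((m-1).choose (j+1) : ℚ) * (j+1) = ((m-1).choose j : ℚ) * ((m:ℚ) - 1 - j) := by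
      have := congrArg (fun n : ℕ => (n : ℚ)) h1
      push_cast at this
      rw [this]
      rw [Nat.cast_sub hjm, Nat.cast_sub (by omega : 1 ≤ m)]; push_cast; ring
    have hC : (0:ℚ) < ((m-1).choose j : ℚ) := by
      exact_mod_cast Nat.choose_pos hjm
    rw [div_mul_eq_mul_div, div_le_iff₀ hiQ]
    have hj1 : (j:ℚ) + 1 ≤ i := by exact_mod_cast hj
    have hmi : (i:ℚ) ≤ (m:ℚ) - 2 := by
      have : (i:ℚ) + 2 ≤ m := by exact_mod_cast him
      linarith
    nlinarith [mul_pos hC hiQ, mul_nonneg hC.le (sub_nonneg.2 hj1)]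
  calc ((m:ℚ) - i) / i * ∑ j ∈ Finset.range i, ((m-1).choose j : ℚ)
      = ∑ j ∈ Finset.range i, ((m:ℚ) - i) / i * ((m-1).choose j : ℚ) := Finset.mul_sum _ _ _
    _ ≤ ∑ j ∈ Finset.range i, ((m-1).choose (j+1) : ℚ) := Finset.sum_le_sum key
    _ < ∑ j ∈ Finset.range (i+1), ((m-1).choose j : ℚ) := by
        rw [Finset.sum_range_succ']
        simp
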